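/- There exists a constant C > 0 such that the following holds: for all δ > 0, every real K ≥ 1, every function u : ℤ³ → ℂ with u(0) = 0 and |u(α)| ≤ δ/|α|² for all α with |α| ≥ K, and every k ∈ ℤ³ with |k| ≥ 2K, one has Σ_{α ∈ ℤ³, K ≤ |α| ≤ 2|k|, |k−α| ≥ |k|/2} |α|·|u(α)|·|u(k−α)| ≤ C·δ². -/

import Mathlib

/-- The Euclidean norm of a lattice point in `ℤ³`. -/
noncomputable def znorm (a : Fin 3 → ℤ) : ℝ := Real.sqrt (∑ i, ((a i : ℝ)) ^ 2)

lemma znorm_nonneg (a : Fin 3 → ℤ) : 0 ≤ znorm a := Real.sqrt_nonneg _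

lemma abs_le_znorm (a : Fin 3 → ℤ) (i : Fin 3) : |((a i : ℝ))| ≤ znorm a := by
  have h : ((a i : ℝ)) ^ 2 ≤ ∑ j, ((a j : ℝ)) ^ 2 :=
    Finset.single_le_sum (f := fun j => ((a j : ℝ)) ^ 2) (fun j _ => sq_nonneg _)
      (Finset.mem_univ i)
  calc |((a i : ℝ))| = Real.sqrt (((a i : ℝ)) ^ 2) := (Real.sqrt_sq_eq_abs _).symm
    _ ≤ znorm a := Real.sqrt_le_sqrt h

lemma znorm_zero : znorm 0 = 0 := by simp [znorm]

/-- The box of radius `M` in `ℤ³` (sup norm ball). -/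
noncomputable def zbox (M : ℕ) : Finset (Fin 3 → ℤ) :=
  Fintype.piFinset fun _ => Finset.Icc (-(M : ℤ)) M

lemma zbox_card (M : ℕ) : (zbox M).card = (2 * M + 1) ^ 3 := by
  rw [zbox, Fintype.card_piFinset]
  have : (Finset.Icc (-(M : ℤ)) M).card = 2 * M + 1 := by
    rw [Int.card_Icc]
    omega
  simp [this]

lemma zbox_mono {M N : ℕ} (h : M ≤ N) : zbox M ⊆ zbox N := by
  intro a ha
  simp only [zbox, Fintype.mem_piFinset, Finset.mem_Icc] at ha ⊢
  intro i
  have := ha i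
  omega

lemma zero_mem_zbox (M : ℕ) : (0 : Fin 3 → ℤ) ∈ zbox M := by
  simp [zbox]

lemma znorm_ge_of_not_mem_zbox {a : Fin 3 → ℤ} {M : ℕ} (h : a ∉ zbox M) :
    ((M : ℝ) + 1) ≤ znorm a := by
  simp only [zbox, Fintype.mem_piFinset, Finset.mem_Icc, not_forall] at h
  obtain ⟨i, hi⟩ := h
  have h1 : (M : ℤ) + 1 ≤ |a i| := by rw [Int.abs_eq_natAbs]; omega
  have h2 : ((M : ℝ) + 1) ≤ |((a i : ℝ))| := by
    rw [← Int.cast_abs]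
    exact_mod_cast h1
  exact h2.trans (abs_le_znorm a i)

lemma znorm_pos_of_mem_erase {a : Fin 3 → ℤ} {M : ℕ} (h : a ∈ (zbox M).erase 0) :
    0 < znorm a := by
  have ha : a ≠ 0 := Finset.ne_of_mem_erase h
  obtain ⟨i, hi⟩ : ∃ i, a i ≠ 0 := by
    by_contra h'; push_neg at h'; exact ha (funext h')
  have h1 : (1 : ℤ) ≤ |a i| := Int.one_le_abs hi
  have h2 : (1 : ℝ) ≤ |((a i : ℝ))| := by
    rw [← Int.cast_abs]; exact_mod_cast h1
  linarith [abs_le_znorm a i]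

lemma sum_inv_znorm_le (M : ℕ) :
    ∑ a ∈ (zbox M).erase 0, (znorm a)⁻¹ ≤ 13 * M * (M + 1) := by
  induction M with
  | zero =>
    have : (zbox 0).erase 0 = ∅ := by
      ext a
      simp only [Finset.mem_erase, Finset.notMem_empty, iff_false, not_and]
      intro ha hmem
      simp only [zbox, Fintype.mem_piFinset, Finset.mem_Icc] at hmem
      exact ha (funext fun i => by have := hmem i; simp only [Pi.zero_apply]; omega)
    simp [this]
  | succ M ih =>
    have hsub : zbox M ⊆ zbox (M + 1) := zbox_mono (Nat.le_succ M)
    have hsplit : (zbox (M + 1)).erase 0 =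
        (zbox M).erase 0 ∪ (zbox (M + 1) \ zbox M) := by
      ext a
      simp only [Finset.mem_erase, Finset.mem_union, Finset.mem_sdiff]
      constructor
      · rintro ⟨ha, hmem⟩
        by_cases h : a ∈ zbox M
        · exact Or.inl ⟨ha, h⟩
        · exact Or.inr ⟨hmem, h⟩
      · rintro (⟨ha, h⟩ | ⟨h1, h2⟩)
        · exact ⟨ha, hsub h⟩
        · refine ⟨?_, h1⟩
          rintro rfl
          exact h2 (zero_mem_zbox M)
    have hdisj : Disjoint ((zbox M).erase 0) (zbox (M + 1) \ zbox M) := by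
      refine Finset.disjoint_left.mpr ?_
      intro a ha hb
      exact (Finset.mem_sdiff.mp hb).2 (Finset.mem_of_mem_erase ha)
    rw [hsplit, Finset.sum_union hdisj]
    have hcard : ((zbox (M + 1) \ zbox M).card : ℝ) ≤ 26 * (M + 1) ^ 2 := by
      rw [Finset.card_sdiff_of_subset hsub, zbox_card, zbox_card]
      have hle : (2 * M + 1) ^ 3 ≤ (2 * (M + 1) + 1) ^ 3 := by
        apply Nat.pow_le_pow_left; omega
      rw [Nat.cast_sub hle]
      push_cast
      nlinarith [sq_nonneg ((M : ℝ)), Nat.cast_nonneg (α := ℝ) M]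
    have hshell : ∑ a ∈ zbox (M + 1) \ zbox M, (znorm a)⁻¹ ≤
        ((zbox (M + 1) \ zbox M).card : ℝ) * ((M : ℝ) + 1)⁻¹ := by
      rw [← nsmul_eq_mul]
      apply Finset.sum_le_card_nsmul
      intro a ha
      have h1 : ((M : ℝ) + 1) ≤ znorm a :=
        znorm_ge_of_not_mem_zbox (Finset.mem_sdiff.mp ha).2
      have h2 : (0 : ℝ) < (M : ℝ) + 1 := by positivity
      exact inv_anti₀ h2 h1
    have hM1 : (0 : ℝ) < (M : ℝ) + 1 := by positivity
    have hshell2 : ((zbox (M + 1) \ zbox M).card : ℝ) * ((M : ℝ) + 1)⁻¹ ≤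
        26 * ((M : ℝ) + 1) := by
      calc ((zbox (M + 1) \ zbox M).card : ℝ) * ((M : ℝ) + 1)⁻¹
          ≤ (26 * (M + 1) ^ 2) * ((M : ℝ) + 1)⁻¹ := by
            apply mul_le_mul_of_nonneg_right hcard (by positivity)
        _ = 26 * ((M : ℝ) + 1) := by field_simp
    push_cast
    nlinarith [ih, hshell.trans hshell2]

theorem middle_frequency_piece_bound :
    ∃ C : ℝ, 0 < C ∧
      ∀ (δ K : ℝ), 0 < δ → 1 ≤ K →
        ∀ u : (Fin 3 → ℤ) → ℂ, u 0 = 0 →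
          (∀ α : Fin 3 → ℤ, K ≤ znorm α → ‖u α‖ ≤ δ / znorm α ^ 2) →
          ∀ k : Fin 3 → ℤ, 2 * K ≤ znorm k →
            (∑' α : {a : Fin 3 → ℤ //
                K ≤ znorm a ∧ znorm a ≤ 2 * znorm k ∧ znorm k / 2 ≤ znorm (k - a)},
              znorm α.1 * ‖u α.1‖ * ‖u (k - α.1)‖)
              ≤ C * δ ^ 2 := by
  refine ⟨468, by norm_num, ?_⟩
  intro δ K hδ hK u hu0 hu k hk
  set kk := znorm k with hkk
  have hkk2 : (2 : ℝ) ≤ kk := by linarith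
  have hkkpos : (0 : ℝ) < kk := by linarith
  set P : (Fin 3 → ℤ) → Prop := fun a =>
    K ≤ znorm a ∧ znorm a ≤ 2 * kk ∧ kk / 2 ≤ znorm (k - a) with hP
  set f : (Fin 3 → ℤ) → ℝ := fun a => znorm a * ‖u a‖ * ‖u (k - a)‖ with hf
  set M : ℕ := ⌈2 * kk⌉₊ with hM
  have hMle : (M : ℝ) ≤ 2 * kk + 1 := le_of_lt (Nat.ceil_lt_add_one (by positivity))
  have hsubset : ∀ a, P a → a ∈ (zbox M).erase 0 := by
    intro a ⟨h1, h2, h3⟩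
    have hane : a ≠ 0 := by
      rintro rfl
      rw [znorm_zero] at h1; linarith
    refine Finset.mem_erase.mpr ⟨hane, ?_⟩
    simp only [zbox, Fintype.mem_piFinset, Finset.mem_Icc]
    intro i
    have hle : |((a i : ℝ))| ≤ (M : ℝ) := le_trans (abs_le_znorm a i)
      (h2.trans (Nat.le_ceil _))
    rw [← Int.cast_abs] at hle
    have h' : |a i| ≤ (M : ℤ) := by exact_mod_cast hle
    rw [Int.abs_eq_natAbs] at h'
    omega
  -- replace the tsum by a finite sum
  have htsum : (∑' α : {a // P a}, f α.1) =
      ∑ a ∈ (zbox M).erase 0, Set.indicator {a | P a} f a := by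
    have e1 : (∑' α : ↥{a : Fin 3 → ℤ | P a}, f α.1) =
        ∑' x, Set.indicator {a : Fin 3 → ℤ | P a} f x := tsum_subtype _ f
    refine e1.trans ?_
    apply tsum_eq_sum
    intro b hb
    apply Set.indicator_of_notMem
    intro hbP
    exact hb (hsubset b hbP)
  refine le_trans (le_of_eq htsum) ?_
  have hbound : ∀ a ∈ (zbox M).erase 0,
      Set.indicator {a | P a} f a ≤ (4 * δ ^ 2 / kk ^ 2) * (znorm a)⁻¹ := by
    intro a ha
    have hapos : 0 < znorm a := znorm_pos_of_mem_erase ha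
    by_cases hmem : a ∈ {a | P a}
    · rw [Set.indicator_of_mem hmem]
      obtain ⟨h1, h2, h3⟩ := hmem
      have hKa : K ≤ znorm a := h1
      have hKka : K ≤ znorm (k - a) := by linarith
      have hu1 : ‖u a‖ ≤ δ / znorm a ^ 2 := hu a hKa
      have hu2 : ‖u (k - a)‖ ≤ δ / znorm (k - a) ^ 2 := hu _ hKka
      have hka_pos : 0 < znorm (k - a) := by linarith
      have hu3 : ‖u (k - a)‖ ≤ 4 * δ / kk ^ 2 := by
        refine hu2.trans ?_
        rw [div_le_div_iff₀ (by positivity) (by positivity)]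
        nlinarith [hδ.le, mul_self_le_mul_self (by positivity : (0:ℝ) ≤ kk / 2) h3]
      have hstep : f a ≤ znorm a * (δ / znorm a ^ 2) * (4 * δ / kk ^ 2) := by
        have := mul_le_mul hu1 hu3 (norm_nonneg _) (by positivity)
        calc f a = znorm a * (‖u a‖ * ‖u (k - a)‖) := by rw [hf]; ring
          _ ≤ znorm a * ((δ / znorm a ^ 2) * (4 * δ / kk ^ 2)) :=
            mul_le_mul_of_nonneg_left this hapos.le
          _ = znorm a * (δ / znorm a ^ 2) * (4 * δ / kk ^ 2) := by ring
      refine hstep.trans (le_of_eq ?_)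
      field_simp
    · rw [Set.indicator_of_notMem hmem]
      positivity
  calc ∑ a ∈ (zbox M).erase 0, Set.indicator {a | P a} f a
      ≤ ∑ a ∈ (zbox M).erase 0, (4 * δ ^ 2 / kk ^ 2) * (znorm a)⁻¹ :=
        Finset.sum_le_sum hbound
    _ = (4 * δ ^ 2 / kk ^ 2) * ∑ a ∈ (zbox M).erase 0, (znorm a)⁻¹ := by
        rw [Finset.mul_sum]
    _ ≤ (4 * δ ^ 2 / kk ^ 2) * (13 * M * (M + 1)) := by
        apply mul_le_mul_of_nonneg_left (sum_inv_znorm_le M) (by positivity)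
    _ ≤ 468 * δ ^ 2 := by
        have h1 : (13 : ℝ) * M * (M + 1) ≤ 13 * (2 * kk + 1) * (2 * kk + 2) := by
          have hM0 : (0 : ℝ) ≤ (M : ℝ) := Nat.cast_nonneg _
          nlinarith
        have h2 : (13 : ℝ) * (2 * kk + 1) * (2 * kk + 2) ≤ 117 * kk ^ 2 := by
          nlinarith
        rw [div_mul_eq_mul_div, div_le_iff₀ (by positivity)]
        nlinarith [sq_nonneg δ, mul_le_mul_of_nonneg_left (h1.trans h2)
          (show (0:ℝ) ≤ 4 * δ ^ 2 by positivity)]
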